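/- In a distance-hereditary graph G, for two vertices s and t, if S_i(s,t) and S_{i+1}(s,t) are two consecutive slices of the interval I(s,t), then every vertex in S_i(s,t) is adjacent to every vertex in S_{i+1}(s,t). -/

import Mathlib

open SimpleGraph

variable {V : Type*}

/-- Distance from a vertex to a set of vertices. -/
noncomputable def setDist (G : SimpleGraph V) (x : V) (S : Set V) : ℕ :=
  sInf (G.dist x '' S)

/-- Eccentricity of a set of vertices. -/
noncomputable def eccSet (G : SimpleGraph V) [Fintype V] (S : Set V) : ℕ :=
  Finset.univ.sup fun v => setDist G v S

/-- Eccentricity of a vertex. -/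
noncomputable def eccV (G : SimpleGraph V) [Fintype V] (v : V) : ℕ :=
  Finset.univ.sup fun u => G.dist v u

/-- Diameter of a graph. -/
noncomputable def diamG (G : SimpleGraph V) [Fintype V] : ℕ :=
  Finset.univ.sup fun v => eccV G v

/-- Projection of a vertex onto a set. -/
def proj (G : SimpleGraph V) (x : V) (S : Set V) : Set V :=
  {u ∈ S | G.dist x u = setDist G x S}

/-- The interval between two vertices. -/
def interval (G : SimpleGraph V) (a b : V) : Set V :=
  {w | G.dist a b = G.dist a w + G.dist w b}

/-- Distance-hereditary: distances in connected induced subgraphs equal distances in `G`. -/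
def DistHereditary (G : SimpleGraph V) : Prop :=
  ∀ S : Set V, (G.induce S).Connected →
    ∀ u v : S, (G.induce S).dist u v = G.dist u.1 v.1

/-- A walk is a shortest path. -/
def IsShortestPath (G : SimpleGraph V) {a b : V} (p : G.Walk a b) : Prop :=
  p.IsPath ∧ p.length = G.dist a b

section Aux

variable {G : SimpleGraph V}

lemma getVert_mem_support' : ∀ {a b : V} (p : G.Walk a b) (n : ℕ),
    p.getVert n ∈ p.support
  | _, _, .nil, n => by simp [SimpleGraph.Walk.getVert]
  | _, _, .cons h p, 0 => by simp [SimpleGraph.Walk.getVert]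
  | _, _, .cons h p, (n+1) => by
      rw [SimpleGraph.Walk.getVert_cons_succ]
      simp only [SimpleGraph.Walk.support_cons, List.mem_cons]
      exact Or.inr (getVert_mem_support' p n)

lemma dist_getVert_le' (hc : G.Connected) : ∀ {a b : V} (p : G.Walk a b) (n : ℕ),
    G.dist a (p.getVert n) ≤ n
  | _, _, .nil, n => by simp [SimpleGraph.Walk.getVert, SimpleGraph.dist_self]
  | _, _, .cons h p, 0 => by simp [SimpleGraph.Walk.getVert, SimpleGraph.dist_self]
  | a, b, .cons (v := c) h p, (n+1) => by
      rw [SimpleGraph.Walk.getVert_cons_succ]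
      have h1 : G.dist a c ≤ 1 := SimpleGraph.dist_le (SimpleGraph.Walk.cons h .nil)
      have h2 := dist_getVert_le' hc p n
      have h3 := hc.dist_triangle (u := a) (v := c) (w := p.getVert n)
      omega

lemma walk_split' (hc : G.Connected) {a b v : V} (p : G.Walk a b)
    (hp : p.length = G.dist a b) (hv : v ∈ p.support) :
    G.dist a v + G.dist v b = G.dist a b := by
  letI := Classical.decEq V
  have h1 : G.dist a v ≤ (p.takeUntil v hv).length := SimpleGraph.dist_le _
  have h2 : G.dist v b ≤ (p.dropUntil v hv).length := SimpleGraph.dist_le _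
  have h3 : (p.takeUntil v hv).length + (p.dropUntil v hv).length = p.length := by
    rw [← SimpleGraph.Walk.length_append, p.take_spec hv]
  have h4 := hc.dist_triangle (u := a) (v := v) (w := b)
  omega

lemma exists_induce_walk {S : Set V} : ∀ {a b : V} (p : G.Walk a b),
    (∀ v ∈ p.support, v ∈ S) → ∀ (ha : a ∈ S) (hb : b ∈ S),
    ∃ q : (G.induce S).Walk ⟨a, ha⟩ ⟨b, hb⟩, q.length = p.length := by
  intro a b p
  induction p with
  | nil => exact fun _ ha hb => ⟨.nil, rfl⟩
  | @cons a c b h p ih =>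
    intro hS ha hb
    have hc : c ∈ S := hS c (by simp)
    obtain ⟨q, hq⟩ := ih (fun x hx => hS x (by simp [hx])) hc hb
    exact ⟨.cons (by exact h) q, by show q.length + 1 = _; simp [hq]⟩

lemma dist_le_of_induce_walk {S : Set V} {x y : ↥S} (q : (G.induce S).Walk x y) :
    G.dist x.1 y.1 ≤ q.length := by
  have := SimpleGraph.dist_le (q.map (SimpleGraph.Embedding.induce S).toHom)
  exact this.trans_eq (Walk.length_map _ _)

lemma dist_val_le_induce_dist {S : Set V} (hc : (G.induce S).Connected) (x y : ↥S) :
    G.dist x.1 y.1 ≤ (G.induce S).dist x y := by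
  obtain ⟨q, hq⟩ := (hc.preconnected x y).exists_walk_length_eq_dist
  calc G.dist x.1 y.1 ≤ q.length := dist_le_of_induce_walk q
    _ = _ := hq

lemma induce_connected_of_walks {S : Set V} {r : V} (hr : r ∈ S)
    (h : ∀ v ∈ S, ∃ p : G.Walk v r, ∀ x ∈ p.support, x ∈ S) :
    (G.induce S).Connected := by
  rw [SimpleGraph.connected_iff]
  refine ⟨fun x y => ?_, ⟨⟨r, hr⟩⟩⟩
  obtain ⟨px, hpx⟩ := h x.1 x.2
  obtain ⟨qx, -⟩ := exists_induce_walk px hpx x.2 hr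
  obtain ⟨py, hpy⟩ := h y.1 y.2
  obtain ⟨qy, -⟩ := exists_induce_walk py hpy y.2 hr
  exact (Walk.reachable qx).trans (Walk.reachable qy).symm

lemma main_case (hconn : G.Connected) (hdh : DistHereditary G)
    {s t w₁ w₂ x : V} {i β : ℕ}
    (hst : G.dist s t = i + 1 + β)
    (hw₁d : G.dist s w₁ = i) (hw₂d : G.dist s w₂ = i + 1)
    (hw₁t : G.dist w₁ t = β + 1)
    (hk2 : 2 ≤ G.dist w₁ w₂)
    (hxadj : G.Adj x w₂)
    (hxgeo : G.dist w₁ x + G.dist x t = G.dist w₁ t) : False := by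
  classical
  obtain ⟨P, hP⟩ := (hconn s w₁).exists_walk_length_eq_dist
  obtain ⟨R₁, hR₁⟩ := (hconn w₁ x).exists_walk_length_eq_dist
  obtain ⟨R₂, hR₂⟩ := (hconn x t).exists_walk_length_eq_dist
  set R : G.Walk w₁ t := R₁.append R₂ with hRdef
  have hRlen : R.length = G.dist w₁ t := by
    rw [hRdef, Walk.length_append, hR₁, hR₂, hxgeo]
  have hxR : x ∈ R.support := (Walk.mem_support_append_iff R₁ R₂).mpr (Or.inl R₁.end_mem_support)
  set S : Set V := {v | v ∈ P.support ∨ v ∈ R.support ∨ v = w₂} with hSdef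
  have hw₁S : w₁ ∈ S := Or.inl P.end_mem_support
  have hsS : s ∈ S := Or.inl P.start_mem_support
  have hw₂S : w₂ ∈ S := Or.inr (Or.inr rfl)
  have hScon : (G.induce S).Connected := by
    apply induce_connected_of_walks hw₁S
    rintro v (hv | hv | rfl)
    · exact ⟨P.dropUntil v hv, fun y hy => Or.inl (P.support_dropUntil_subset hv hy)⟩
    · refine ⟨(R.takeUntil v hv).reverse, fun y hy => Or.inr (Or.inl ?_)⟩
      rw [Walk.support_reverse] at hy
      exact R.support_takeUntil_subset hv (List.mem_reverse.mp hy)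
    · refine ⟨Walk.cons hxadj.symm (R.takeUntil x hxR).reverse, ?_⟩
      intro y hy
      rw [Walk.support_cons, List.mem_cons] at hy
      rcases hy with rfl | hy
      · exact Or.inr (Or.inr rfl)
      · rw [Walk.support_reverse] at hy
        exact Or.inr (Or.inl (R.support_takeUntil_subset hxR (List.mem_reverse.mp hy)))
  have hdist := hdh S hScon ⟨w₂, hw₂S⟩ ⟨s, hsS⟩
  obtain ⟨W, hW⟩ :=
    (hScon.preconnected ⟨w₂, hw₂S⟩ ⟨s, hsS⟩).exists_walk_length_eq_dist
  have hWlen : W.length = i + 1 := by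
    rw [hW, hdist]
    rw [SimpleGraph.dist_comm, hw₂d]
  have hWnil : ¬ W.Nil := by
    rw [Walk.not_nil_iff_lt_length]
    omega
  have hadjn : (G.induce S).Adj ⟨w₂, hw₂S⟩ (W.getVert 1) := W.adj_snd hWnil
  set n : ↥S := W.getVert 1 with hn
  have hnadj : G.Adj w₂ n.1 := hadjn
  have hns : G.dist s n.1 ≤ i := by
    have h1 : (G.induce S).dist n ⟨s, hsS⟩ ≤ W.tail.length := SimpleGraph.dist_le W.tail
    have h2 : W.tail.length + 1 = W.length := Walk.length_tail_add_one hWnil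
    have h3 : G.dist n.1 s ≤ (G.induce S).dist n ⟨s, hsS⟩ :=
      dist_val_le_induce_dist hScon n ⟨s, hsS⟩
    have h4 : G.dist s n.1 = G.dist n.1 s := SimpleGraph.dist_comm
    omega
  have hnw₁ : n.1 ≠ w₁ := by
    intro h
    have : G.dist w₁ w₂ = 1 :=
      SimpleGraph.dist_eq_one_iff_adj.mpr (by rw [← h]; exact hnadj.symm)
    omega
  obtain hnP | hnR | hnw₂ : n.1 ∈ P.support ∨ n.1 ∈ R.support ∨ n.1 = w₂ := n.2
  · have hsplit := walk_split' hconn P hP hnP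
    have hd1 : G.dist s w₂ ≤ G.dist s n.1 + G.dist n.1 w₂ := hconn.dist_triangle
    have hd2 : G.dist n.1 w₂ = 1 := SimpleGraph.dist_eq_one_iff_adj.mpr hnadj.symm
    have h0 : G.dist n.1 w₁ = 0 := by omega
    exact hnw₁ (hconn.dist_eq_zero_iff.mp h0)
  · have hsplit := walk_split' hconn R hRlen hnR
    have h1 : 1 ≤ G.dist w₁ n.1 := hconn.pos_dist_of_ne (fun h => hnw₁ h.symm)
    have htri : G.dist s t ≤ G.dist s n.1 + G.dist n.1 t := hconn.dist_triangle
    omega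
  · exact G.loopless.irrefl w₂ (by rw [hnw₂] at hnadj; exact hnadj)

end Aux

section Key

variable {G : SimpleGraph V}

lemma key_lemma (hconn : G.Connected) (hdh : DistHereditary G) (s t : V) :
    ∀ k i (w₁ w₂ : V), w₁ ∈ interval G s t → G.dist s w₁ = i →
      w₂ ∈ interval G s t → G.dist s w₂ = i + 1 →
      G.dist w₁ w₂ = k → 2 ≤ k → False := by
  classical
  intro k
  induction k using Nat.strong_induction_on with
  | _ k IH =>
  intro i w₁ w₂ hw₁ hw₁d hw₂ hw₂d hk hk2
  obtain ⟨m, rfl⟩ : ∃ m, k = m + 2 := ⟨k - 2, by omega⟩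
  have hw₂t : G.dist s t = G.dist s w₂ + G.dist w₂ t := hw₂
  have hw₁t' : G.dist s t = G.dist s w₁ + G.dist w₁ t := hw₁
  have hst : G.dist s t = i + 1 + G.dist w₂ t := by omega
  have hw₁t : G.dist w₁ t = G.dist w₂ t + 1 := by omega
  -- t-side analysis
  obtain ⟨A, hA⟩ := (hconn w₁ t).exists_walk_length_eq_dist
  obtain ⟨B, hB⟩ := (hconn w₂ t).exists_walk_length_eq_dist
  set S' : Set V := {v | v ∈ A.support ∨ v ∈ B.support} with hS'
  have htS : t ∈ S' := Or.inl A.end_mem_support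
  have hw₁S : w₁ ∈ S' := Or.inl A.start_mem_support
  have hw₂S : w₂ ∈ S' := Or.inr B.start_mem_support
  have hScon : (G.induce S').Connected := by
    apply induce_connected_of_walks htS
    rintro v (hv | hv)
    · exact ⟨A.dropUntil v hv, fun y hy => Or.inl (A.support_dropUntil_subset hv hy)⟩
    · exact ⟨B.dropUntil v hv, fun y hy => Or.inr (B.support_dropUntil_subset hv hy)⟩
  have hdist := hdh S' hScon ⟨w₁, hw₁S⟩ ⟨w₂, hw₂S⟩
  obtain ⟨q, hq⟩ :=
    (hScon.preconnected ⟨w₁, hw₁S⟩ ⟨w₂, hw₂S⟩).exists_walk_length_eq_dist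
  have hqlen : q.length = m + 2 := by rw [hq, hdist, hk]
  have hadjx : (G.induce S').Adj (q.getVert (m+1)) (q.getVert (m+2)) :=
    q.adj_getVert_succ (by rw [hqlen]; omega)
  have hqend : q.getVert (m+2) = ⟨w₂, hw₂S⟩ := by
    rw [← hqlen]; exact q.getVert_length
  rw [hqend] at hadjx
  set x : ↥S' := q.getVert (m+1) with hxdef
  have hxadj : G.Adj x.1 w₂ := hadjx
  have hxw₁u : G.dist w₁ x.1 ≤ m + 1 := by
    have h1 : (G.induce S').dist ⟨w₁, hw₁S⟩ x ≤ m + 1 := dist_getVert_le' hScon q (m+1)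
    have h2 : G.dist w₁ x.1 ≤ (G.induce S').dist ⟨w₁, hw₁S⟩ x :=
      dist_val_le_induce_dist hScon ⟨w₁, hw₁S⟩ x
    omega
  have hxw₁ : G.dist w₁ x.1 = m + 1 := by
    have htri : G.dist w₁ w₂ ≤ G.dist w₁ x.1 + G.dist x.1 w₂ := hconn.dist_triangle
    have hd1 : G.dist x.1 w₂ = 1 := SimpleGraph.dist_eq_one_iff_adj.mpr hxadj
    omega
  obtain hxA | hxB : x.1 ∈ A.support ∨ x.1 ∈ B.support := x.2
  · have hgeo := walk_split' hconn A hA hxA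
    exact main_case hconn hdh hst hw₁d hw₂d hw₁t (by omega) hxadj hgeo
  · have hsplit := walk_split' hconn B hB hxB
    have hd1 : G.dist w₂ x.1 = 1 := SimpleGraph.dist_eq_one_iff_adj.mpr hxadj.symm
    have htri : G.dist w₁ t ≤ G.dist w₁ x.1 + G.dist x.1 t := hconn.dist_triangle
    by_cases hm1 : m = 1
    · subst hm1
      have hgeo : G.dist w₁ x.1 + G.dist x.1 t = G.dist w₁ t := by omega
      exact main_case hconn hdh hst hw₁d hw₂d hw₁t (by omega) hxadj hgeo
    · have hm2 : 2 ≤ m := by omega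
      -- s-side reduction
      obtain ⟨C, hC⟩ := (hconn s w₁).exists_walk_length_eq_dist
      obtain ⟨D, hD⟩ := (hconn s w₂).exists_walk_length_eq_dist
      set S₂ : Set V := {v | v ∈ C.support ∨ v ∈ D.support} with hS₂
      have hsS : s ∈ S₂ := Or.inl C.start_mem_support
      have hw₁S₂ : w₁ ∈ S₂ := Or.inl C.end_mem_support
      have hw₂S₂ : w₂ ∈ S₂ := Or.inr D.end_mem_support
      have hScon₂ : (G.induce S₂).Connected := by
        apply induce_connected_of_walks hsS
        rintro v (hv | hv)
        · refine ⟨(C.takeUntil v hv).reverse, fun y hy => Or.inl ?_⟩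
          rw [Walk.support_reverse] at hy
          exact C.support_takeUntil_subset hv (List.mem_reverse.mp hy)
        · refine ⟨(D.takeUntil v hv).reverse, fun y hy => Or.inr ?_⟩
          rw [Walk.support_reverse] at hy
          exact D.support_takeUntil_subset hv (List.mem_reverse.mp hy)
      have hdist₂ := hdh S₂ hScon₂ ⟨w₁, hw₁S₂⟩ ⟨w₂, hw₂S₂⟩
      obtain ⟨r, hr⟩ :=
        (hScon₂.preconnected ⟨w₁, hw₁S₂⟩ ⟨w₂, hw₂S₂⟩).exists_walk_length_eq_dist
      have hrlen : r.length = m + 2 := by rw [hr, hdist₂, hk]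
      have hadjub : (G.induce S₂).Adj (r.getVert m) (r.getVert (m+1)) :=
        r.adj_getVert_succ (by rw [hrlen]; omega)
      have hadjbw : (G.induce S₂).Adj (r.getVert (m+1)) (r.getVert (m+2)) :=
        r.adj_getVert_succ (by rw [hrlen]; omega)
      have hrend : r.getVert (m+2) = ⟨w₂, hw₂S₂⟩ := by
        rw [← hrlen]; exact r.getVert_length
      rw [hrend] at hadjbw
      set u : ↥S₂ := r.getVert m with hudef
      set b : ↥S₂ := r.getVert (m+1) with hbdef
      have hub : G.Adj u.1 b.1 := hadjub
      have hbw : G.Adj b.1 w₂ := hadjbw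
      have hduu : G.dist w₁ u.1 ≤ m := by
        have h1 : (G.induce S₂).dist ⟨w₁, hw₁S₂⟩ u ≤ m := dist_getVert_le' hScon₂ r m
        have h2 : G.dist w₁ u.1 ≤ (G.induce S₂).dist ⟨w₁, hw₁S₂⟩ u :=
          dist_val_le_induce_dist hScon₂ ⟨w₁, hw₁S₂⟩ u
        omega
      have he1 : G.dist u.1 b.1 = 1 := SimpleGraph.dist_eq_one_iff_adj.mpr hub
      have he2 : G.dist b.1 w₂ = 1 := SimpleGraph.dist_eq_one_iff_adj.mpr hbw
      have huw₂le : G.dist u.1 w₂ ≤ 2 := by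
        have htri2 : G.dist u.1 w₂ ≤ G.dist u.1 b.1 + G.dist b.1 w₂ := hconn.dist_triangle
        omega
      have htri3 : G.dist w₁ w₂ ≤ G.dist w₁ u.1 + G.dist u.1 w₂ := hconn.dist_triangle
      have hdu : G.dist w₁ u.1 = m := by omega
      have huw₂ : G.dist u.1 w₂ = 2 := by omega
      obtain huC | huD : u.1 ∈ C.support ∨ u.1 ∈ D.support := u.2
      · have hsplitC := walk_split' hconn C hC huC
        have hcomm : G.dist u.1 w₁ = G.dist w₁ u.1 := SimpleGraph.dist_comm
        have htri4 : G.dist s w₂ ≤ G.dist s u.1 + G.dist u.1 w₂ := hconn.dist_triangle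
        omega
      · have hsplitD := walk_split' hconn D hD huD
        -- G.dist s u + 2 = i + 1
        have htri5 : G.dist s t ≤ G.dist s u.1 + G.dist u.1 t := hconn.dist_triangle
        have htri6 : G.dist u.1 t ≤ G.dist u.1 w₂ + G.dist w₂ t := hconn.dist_triangle
        have hut : G.dist u.1 t = G.dist w₂ t + 2 := by omega
        have huI : u.1 ∈ interval G s t := by
          show G.dist s t = G.dist s u.1 + G.dist u.1 t
          omega
        have hcomm : G.dist u.1 w₁ = G.dist w₁ u.1 := SimpleGraph.dist_comm
        exact IH m (by omega) (G.dist s u.1) u.1 w₁ huI rfl hw₁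
          (by omega) (by omega) hm2

end Key

theorem stmt_3 {V : Type*} [Fintype V] (G : SimpleGraph V) (hconn : G.Connected)
    (hdh : DistHereditary G) (s t : V) (i : ℕ) (w₁ w₂ : V)
    (hw₁ : w₁ ∈ interval G s t) (hw₁d : G.dist s w₁ = i)
    (hw₂ : w₂ ∈ interval G s t) (hw₂d : G.dist s w₂ = i + 1) :
    G.Adj w₁ w₂ := by
  by_contra hadj
  have hne : w₁ ≠ w₂ := by
    rintro rfl
    omega
  have h1 : 1 ≤ G.dist w₁ w₂ := hconn.pos_dist_of_ne hne
  have h2 : G.dist w₁ w₂ ≠ 1 := fun h => hadj (SimpleGraph.dist_eq_one_iff_adj.mp h)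
  exact key_lemma hconn hdh s t (G.dist w₁ w₂) i w₁ w₂ hw₁ hw₁d hw₂ hw₂d rfl (by omega)
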